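/- The two-layer Bonferroni-based gatekeeping procedure with retesting (Algorithm 3) strongly controls the global FWER at level α under arbitrary dependence: given families F_{ij} (i = 1,2; j ≤ m_i) of sizes n_{ij}, superuniform true-null p-values, initial levels α_{ij} ≥ 0 with total α, and transition coefficients g_{ijkl} as specified, if at each stage each family is tested by Bonferroni at its updated local level and the rejection sets are nested across stages, then the probability that any true null hypothesis is ever rejected is at most α. -/

import Mathlib

open MeasureTheory

/-- Helper: superuniformity extends from `[0,1]` to all nonnegative `u`
for a probability measure. -/
lemma aux_super_ext {Ω : Type*} [MeasurableSpace Ω] (μ : Measure Ω)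
    [IsProbabilityMeasure μ] (p : Ω → ℝ)
    (h : ∀ u ∈ Set.Icc (0 : ℝ) 1, μ {ω | p ω ≤ u} ≤ ENNReal.ofReal u)
    (u : ℝ) (hu : 0 ≤ u) : μ {ω | p ω ≤ u} ≤ ENNReal.ofReal u := by
  rcases le_or_gt u 1 with h1 | h1
  · exact h u ⟨hu, h1⟩
  · calc μ {ω | p ω ≤ u} ≤ 1 := prob_le_one
      _ = ENNReal.ofReal 1 := by simp
      _ ≤ ENNReal.ofReal u := ENNReal.ofReal_le_ofReal h1.le

/-- Helper: if a filtered set avoids `T`, its cardinality is at most `n - |T|`. -/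
lemma aux_card_filter_le {n : ℕ} (T : Finset (Fin n)) (P : Fin n → Prop)
    [DecidablePred P] (h : ∀ s ∈ T, ¬ P s) :
    ((Finset.univ.filter P).card : ℝ) ≤ (n : ℝ) - T.card := by
  have hsub : Finset.univ.filter P ⊆ Tᶜ := by
    intro s hs
    rw [Finset.mem_compl]
    intro hsT
    exact h s hsT (Finset.mem_filter.mp hs).2
  have hle := Finset.card_le_card hsub
  rw [Finset.card_compl, Fintype.card_fin] at hle
  have hT : T.card ≤ n := by
    simpa using Finset.card_le_card (Finset.subset_univ T)
  calc ((Finset.univ.filter P).card : ℝ) ≤ ((n - T.card : ℕ) : ℝ) :=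
        Nat.cast_le.mpr hle
    _ = (n : ℝ) - T.card := by rw [Nat.cast_sub hT]

/-- Theorem 2: the two-layer Bonferroni-based gatekeeping procedure with
retesting (Algorithm 3) strongly controls the global FWER at level `α` under
arbitrary dependence. -/
theorem two_layer_retesting_FWER_control
    {Ω : Type*} [MeasurableSpace Ω] (μ : Measure Ω) [IsProbabilityMeasure μ]
    (m1 m2 : ℕ) (hm1 : 0 < m1) (hm2 : 0 < m2)
    (n1 : Fin m1 → ℕ) (n2 : Fin m2 → ℕ)
    (hn1 : ∀ j, 0 < n1 j) (hn2 : ∀ l, 0 < n2 l)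
    (p1 : (j : Fin m1) → Fin (n1 j) → Ω → ℝ)
    (p2 : (l : Fin m2) → Fin (n2 l) → Ω → ℝ)
    (hmeas1 : ∀ j s, Measurable (p1 j s)) (hmeas2 : ∀ l s, Measurable (p2 l s))
    (T1 : (j : Fin m1) → Finset (Fin (n1 j)))
    (T2 : (l : Fin m2) → Finset (Fin (n2 l)))
    (hsuper1 : ∀ j, ∀ s ∈ T1 j, ∀ u ∈ Set.Icc (0 : ℝ) 1,
      μ {ω | p1 j s ω ≤ u} ≤ ENNReal.ofReal u)
    (hsuper2 : ∀ l, ∀ s ∈ T2 l, ∀ u ∈ Set.Icc (0 : ℝ) 1,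
      μ {ω | p2 l s ω ≤ u} ≤ ENNReal.ofReal u)
    (a1 : Fin m1 → ℝ) (a2 : Fin m2 → ℝ) (α : ℝ)
    (ha1 : ∀ j, 0 ≤ a1 j) (ha2 : ∀ l, 0 ≤ a2 l)
    (hα : (∑ j, a1 j) + ∑ l, a2 l = α)
    (g12 : Fin m1 → Fin m2 → ℝ) (g21 : Fin m2 → Fin m1 → ℝ)
    (hg12 : ∀ j l, 0 ≤ g12 j l ∧ g12 j l ≤ 1)
    (hg21 : ∀ l j, 0 ≤ g21 l j ∧ g21 l j ≤ 1)
    (hg12row : ∀ j, ∑ l, g12 j l = 1) (hg21row : ∀ l, ∑ j, g21 l j = 1)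
    -- stagewise local levels, as functions of the data:
    (A1 : Fin m1 → ℕ → Ω → ℝ) (A2 : Fin m2 → ℕ → Ω → ℝ)
    (hA1one : ∀ j ω, A1 j 1 ω = a1 j)
    (hA2 : ∀ k, 1 ≤ k → ∀ l ω, A2 l k ω = a2 l
      + ∑ j, (((Finset.univ.filter fun s => p1 j s ω ≤ A1 j k ω / n1 j).card : ℝ)
          / n1 j) * g12 j l * A1 j k ω)
    (hA1 : ∀ k, 2 ≤ k → ∀ j ω, A1 j k ω = a1 j
      + ∑ l, (((Finset.univ.filter fun s =>
            p2 l s ω ≤ A2 l (k - 1) ω / n2 l).card : ℝ) / n2 l)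
          * g21 l j * a2 l)
    -- rejection sets are nested across stages:
    (hnest1 : ∀ j ω s k k', 1 ≤ k → k ≤ k' →
      p1 j s ω ≤ A1 j k ω / n1 j → p1 j s ω ≤ A1 j k' ω / n1 j)
    (hnest2 : ∀ l ω s k k', 1 ≤ k → k ≤ k' →
      p2 l s ω ≤ A2 l k ω / n2 l → p2 l s ω ≤ A2 l k' ω / n2 l) :
    μ {ω | ∃ k, 1 ≤ k ∧
        ((∃ j, ∃ s ∈ T1 j, p1 j s ω ≤ A1 j k ω / n1 j)
          ∨ (∃ l, ∃ s ∈ T2 l, p2 l s ω ≤ A2 l k ω / n2 l))}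
      ≤ ENNReal.ofReal α := by
  classical
  -- positivity of family sizes over ℝ
  have hn1R : ∀ j, (0 : ℝ) < n1 j := fun j => by exact_mod_cast hn1 j
  have hn2R : ∀ l, (0 : ℝ) < n2 l := fun l => by exact_mod_cast hn2 l
  set t1 : Fin m1 → ℝ := fun j => ((T1 j).card : ℝ) with ht1
  set t2 : Fin m2 → ℝ := fun l => ((T2 l).card : ℝ) with ht2
  have ht1le : ∀ j, t1 j ≤ n1 j := fun j => by
    have h : (T1 j).card ≤ n1 j := by
      simpa using Finset.card_le_card (Finset.subset_univ (T1 j))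
    simp only [ht1]; exact_mod_cast h
  have ht2le : ∀ l, t2 l ≤ n2 l := fun l => by
    have h : (T2 l).card ≤ n2 l := by
      simpa using Finset.card_le_card (Finset.subset_univ (T2 l))
    simp only [ht2]; exact_mod_cast h
  have ht1nn : ∀ j, 0 ≤ t1 j := fun j => by positivity
  have ht2nn : ∀ l, 0 ≤ t2 l := fun l => by positivity
  -- the deterministic bounding levels
  set b1 : Fin m1 → ℝ :=
    fun j => a1 j + ∑ l, (((n2 l : ℝ) - t2 l) / n2 l) * g21 l j * a2 l with hb1
  set b2 : Fin m2 → ℝ :=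
    fun l => a2 l + ∑ j, (((n1 j : ℝ) - t1 j) / n1 j) * g12 j l * b1 j with hb2
  have hc2nn : ∀ l, 0 ≤ ((n2 l : ℝ) - t2 l) / n2 l := fun l =>
    div_nonneg (by linarith [ht2le l]) (hn2R l).le
  have hc1nn : ∀ j, 0 ≤ ((n1 j : ℝ) - t1 j) / n1 j := fun j =>
    div_nonneg (by linarith [ht1le j]) (hn1R j).le
  have hb1nn : ∀ j, 0 ≤ b1 j := by
    intro j
    refine add_nonneg (ha1 j) (Finset.sum_nonneg fun l _ => ?_)
    exact mul_nonneg (mul_nonneg (hc2nn l) (hg21 l j).1) (ha2 l)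
  have hb1ge : ∀ j, a1 j ≤ b1 j := by
    intro j
    have : 0 ≤ ∑ l, (((n2 l : ℝ) - t2 l) / n2 l) * g21 l j * a2 l :=
      Finset.sum_nonneg fun l _ =>
        mul_nonneg (mul_nonneg (hc2nn l) (hg21 l j).1) (ha2 l)
    simp only [hb1]; linarith
  have hb2nn : ∀ l, 0 ≤ b2 l := by
    intro l
    refine add_nonneg (ha2 l) (Finset.sum_nonneg fun j _ => ?_)
    exact mul_nonneg (mul_nonneg (hc1nn j) (hg12 j l).1) (hb1nn j)
  -- nonnegativity of the running layer-1 levels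
  have hA1nn : ∀ k, 1 ≤ k → ∀ j ω, 0 ≤ A1 j k ω := by
    intro k hk j ω
    rcases eq_or_lt_of_le hk with h1 | h2
    · rw [← h1, hA1one]; exact ha1 j
    · rw [hA1 k h2 j ω]
      refine add_nonneg (ha1 j) (Finset.sum_nonneg fun l _ => ?_)
      exact mul_nonneg (mul_nonneg (div_nonneg (by positivity) (hn2R l).le)
        (hg21 l j).1) (ha2 l)
  -- Key lemma: if no true null in layer 2 was rejected before stage k,
  -- then the layer-1 level at stage k is at most b1.
  have key1 : ∀ k, 1 ≤ k → ∀ ω,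
      (∀ k', 1 ≤ k' → k' < k → ∀ l, ∀ s ∈ T2 l,
        ¬ p2 l s ω ≤ A2 l k' ω / n2 l) →
      ∀ j, A1 j k ω ≤ b1 j := by
    intro k hk ω hno j
    rcases eq_or_lt_of_le hk with h1 | h2
    · rw [← h1, hA1one]; exact hb1ge j
    · rw [hA1 k h2 j ω, hb1]
      refine add_le_add_right (Finset.sum_le_sum fun l _ => ?_) _
      have hcard : ((Finset.univ.filter fun s =>
          p2 l s ω ≤ A2 l (k - 1) ω / n2 l).card : ℝ) ≤ (n2 l : ℝ) - t2 l :=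
        aux_card_filter_le (T2 l) _
          (hno (k - 1) (by omega) (by omega) l)
      have h1 : ((Finset.univ.filter fun s =>
          p2 l s ω ≤ A2 l (k - 1) ω / n2 l).card : ℝ) / n2 l
          ≤ ((n2 l : ℝ) - t2 l) / n2 l :=
        div_le_div_of_nonneg_right hcard (hn2R l).le
      exact mul_le_mul_of_nonneg_right
        (mul_le_mul_of_nonneg_right h1 (hg21 l j).1) (ha2 l)
  -- Step 1: the bad event is contained in a deterministic union
  have hsub : {ω | ∃ k, 1 ≤ k ∧
        ((∃ j, ∃ s ∈ T1 j, p1 j s ω ≤ A1 j k ω / n1 j)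
          ∨ (∃ l, ∃ s ∈ T2 l, p2 l s ω ≤ A2 l k ω / n2 l))}
      ⊆ (⋃ j, ⋃ s ∈ (T1 j : Set (Fin (n1 j))), {ω | p1 j s ω ≤ b1 j / n1 j})
        ∪ ⋃ l, ⋃ s ∈ (T2 l : Set (Fin (n2 l))),
            {ω | p2 l s ω ≤ b2 l / n2 l} := by
    intro ω hω
    have hex : ∃ k, 1 ≤ k ∧
        ((∃ j, ∃ s ∈ T1 j, p1 j s ω ≤ A1 j k ω / n1 j)
          ∨ (∃ l, ∃ s ∈ T2 l, p2 l s ω ≤ A2 l k ω / n2 l)) := hω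
    set k0 := Nat.find hex with hk0
    have hspec := Nat.find_spec hex
    have hmin : ∀ k' < k0, ¬ (1 ≤ k' ∧
        ((∃ j, ∃ s ∈ T1 j, p1 j s ω ≤ A1 j k' ω / n1 j)
          ∨ (∃ l, ∃ s ∈ T2 l, p2 l s ω ≤ A2 l k' ω / n2 l))) :=
      fun k' hk' => Nat.find_min hex hk'
    have hk01 : 1 ≤ k0 := hspec.1
    have hno2 : ∀ k', 1 ≤ k' → k' < k0 → ∀ l, ∀ s ∈ T2 l,
        ¬ p2 l s ω ≤ A2 l k' ω / n2 l := by
      intro k' h1 h2 l s hs hp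
      exact hmin k' h2 ⟨h1, Or.inr ⟨l, s, hs, hp⟩⟩
    have hA1le : ∀ j, A1 j k0 ω ≤ b1 j := key1 k0 hk01 ω hno2
    by_cases hcase : ∃ j, ∃ s ∈ T1 j, p1 j s ω ≤ A1 j k0 ω / n1 j
    · obtain ⟨j, s, hs, hp⟩ := hcase
      refine Set.mem_union_left _ ?_
      refine Set.mem_iUnion.mpr ⟨j, Set.mem_iUnion₂.mpr ⟨s, hs, ?_⟩⟩
      exact hp.trans (div_le_div_of_nonneg_right (hA1le j) (hn1R j).le)
    · obtain ⟨l, s, hs, hp⟩ := hspec.2.resolve_left hcase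
      -- bound A2 l k0 ω ≤ b2 l
      have hA2le : A2 l k0 ω ≤ b2 l := by
        rw [hA2 k0 hk01 l ω, hb2]
        refine add_le_add_right (Finset.sum_le_sum fun j _ => ?_) _
        have hcard : ((Finset.univ.filter fun s' =>
            p1 j s' ω ≤ A1 j k0 ω / n1 j).card : ℝ) ≤ (n1 j : ℝ) - t1 j := by
          refine aux_card_filter_le (T1 j) _ ?_
          intro s' hs' hp'
          exact hcase ⟨j, s', hs', hp'⟩
        have h1 : ((Finset.univ.filter fun s' =>
            p1 j s' ω ≤ A1 j k0 ω / n1 j).card : ℝ) / n1 j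
            ≤ ((n1 j : ℝ) - t1 j) / n1 j :=
          div_le_div_of_nonneg_right hcard (hn1R j).le
        refine mul_le_mul (mul_le_mul_of_nonneg_right h1 (hg12 j l).1)
          (hA1le j) (hA1nn k0 hk01 j ω) ?_
        exact mul_nonneg (hc1nn j) (hg12 j l).1
      refine Set.mem_union_right _ ?_
      refine Set.mem_iUnion.mpr ⟨l, Set.mem_iUnion₂.mpr ⟨s, hs, ?_⟩⟩
      exact hp.trans (div_le_div_of_nonneg_right hA2le (hn2R l).le)
  -- Step 2: union bound
  have hbound1 : ∀ j, μ (⋃ s ∈ (T1 j : Set (Fin (n1 j))),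
      {ω | p1 j s ω ≤ b1 j / n1 j}) ≤ ENNReal.ofReal (t1 j * (b1 j / n1 j)) := by
    intro j
    have hdiv : (0 : ℝ) ≤ b1 j / n1 j := div_nonneg (hb1nn j) (hn1R j).le
    calc μ (⋃ s ∈ (T1 j : Set (Fin (n1 j))), {ω | p1 j s ω ≤ b1 j / n1 j})
        ≤ ∑ s ∈ T1 j, μ {ω | p1 j s ω ≤ b1 j / n1 j} :=
          measure_biUnion_finset_le _ _
      _ ≤ ∑ s ∈ T1 j, ENNReal.ofReal (b1 j / n1 j) :=
          Finset.sum_le_sum fun s hs =>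
            aux_super_ext μ (p1 j s) (hsuper1 j s hs) _ hdiv
      _ = (T1 j).card * ENNReal.ofReal (b1 j / n1 j) := by
          rw [Finset.sum_const, nsmul_eq_mul]
      _ = ENNReal.ofReal (t1 j * (b1 j / n1 j)) := by
          rw [ENNReal.ofReal_mul (ht1nn j)]
          simp [ht1]
  have hbound2 : ∀ l, μ (⋃ s ∈ (T2 l : Set (Fin (n2 l))),
      {ω | p2 l s ω ≤ b2 l / n2 l}) ≤ ENNReal.ofReal (t2 l * (b2 l / n2 l)) := by
    intro l
    have hdiv : (0 : ℝ) ≤ b2 l / n2 l := div_nonneg (hb2nn l) (hn2R l).le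
    calc μ (⋃ s ∈ (T2 l : Set (Fin (n2 l))), {ω | p2 l s ω ≤ b2 l / n2 l})
        ≤ ∑ s ∈ T2 l, μ {ω | p2 l s ω ≤ b2 l / n2 l} :=
          measure_biUnion_finset_le _ _
      _ ≤ ∑ s ∈ T2 l, ENNReal.ofReal (b2 l / n2 l) :=
          Finset.sum_le_sum fun s hs =>
            aux_super_ext μ (p2 l s) (hsuper2 l s hs) _ hdiv
      _ = (T2 l).card * ENNReal.ofReal (b2 l / n2 l) := by
          rw [Finset.sum_const, nsmul_eq_mul]
      _ = ENNReal.ofReal (t2 l * (b2 l / n2 l)) := by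
          rw [ENNReal.ofReal_mul (ht2nn l)]
          simp [ht2]
  -- combine
  have hterm1nn : ∀ j, (0 : ℝ) ≤ t1 j * (b1 j / n1 j) := fun j =>
    mul_nonneg (ht1nn j) (div_nonneg (hb1nn j) (hn1R j).le)
  have hterm2nn : ∀ l, (0 : ℝ) ≤ t2 l * (b2 l / n2 l) := fun l =>
    mul_nonneg (ht2nn l) (div_nonneg (hb2nn l) (hn2R l).le)
  have hmeasure : μ {ω | ∃ k, 1 ≤ k ∧
        ((∃ j, ∃ s ∈ T1 j, p1 j s ω ≤ A1 j k ω / n1 j)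
          ∨ (∃ l, ∃ s ∈ T2 l, p2 l s ω ≤ A2 l k ω / n2 l))}
      ≤ ENNReal.ofReal ((∑ j, t1 j * (b1 j / n1 j))
          + ∑ l, t2 l * (b2 l / n2 l)) := by
    calc μ _ ≤ μ ((⋃ j, ⋃ s ∈ (T1 j : Set (Fin (n1 j))),
            {ω | p1 j s ω ≤ b1 j / n1 j})
          ∪ ⋃ l, ⋃ s ∈ (T2 l : Set (Fin (n2 l))),
              {ω | p2 l s ω ≤ b2 l / n2 l}) := measure_mono hsub
      _ ≤ μ (⋃ j, ⋃ s ∈ (T1 j : Set (Fin (n1 j))),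
            {ω | p1 j s ω ≤ b1 j / n1 j})
          + μ (⋃ l, ⋃ s ∈ (T2 l : Set (Fin (n2 l))),
            {ω | p2 l s ω ≤ b2 l / n2 l}) := measure_union_le _ _
      _ ≤ (∑ j, μ (⋃ s ∈ (T1 j : Set (Fin (n1 j))),
            {ω | p1 j s ω ≤ b1 j / n1 j}))
          + ∑ l, μ (⋃ s ∈ (T2 l : Set (Fin (n2 l))),
            {ω | p2 l s ω ≤ b2 l / n2 l}) := by
          gcongr <;> exact measure_iUnion_fintype_le _ _
      _ ≤ (∑ j, ENNReal.ofReal (t1 j * (b1 j / n1 j)))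
          + ∑ l, ENNReal.ofReal (t2 l * (b2 l / n2 l)) := by
          gcongr with j _ l _
          · exact hbound1 j
          · exact hbound2 l
      _ = ENNReal.ofReal ((∑ j, t1 j * (b1 j / n1 j))
          + ∑ l, t2 l * (b2 l / n2 l)) := by
          rw [← ENNReal.ofReal_sum_of_nonneg (fun j _ => hterm1nn j),
            ← ENNReal.ofReal_sum_of_nonneg (fun l _ => hterm2nn l),
            ← ENNReal.ofReal_add (Finset.sum_nonneg fun j _ => hterm1nn j)
              (Finset.sum_nonneg fun l _ => hterm2nn l)]
  refine hmeasure.trans (ENNReal.ofReal_le_ofReal ?_)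
  -- Step 3: the purely algebraic inequality
  have hsplit1 : ∀ j, t1 j / n1 j + ((n1 j : ℝ) - t1 j) / n1 j = 1 := by
    intro j
    rw [← add_div, show t1 j + ((n1 j : ℝ) - t1 j) = (n1 j : ℝ) by ring,
      div_self (hn1R j).ne']
  have hsplit2 : ∀ l, t2 l / n2 l + ((n2 l : ℝ) - t2 l) / n2 l = 1 := by
    intro l
    rw [← add_div, show t2 l + ((n2 l : ℝ) - t2 l) = (n2 l : ℝ) by ring,
      div_self (hn2R l).ne']
  have hr2le : ∀ l, t2 l / n2 l ≤ 1 := by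
    intro l
    rw [div_le_one (hn2R l)]
    exact ht2le l
  -- expand the layer-2 contribution
  have hexp2 : ∑ l, t2 l * (b2 l / n2 l)
      = (∑ l, (t2 l / n2 l) * a2 l)
        + ∑ j, (((n1 j : ℝ) - t1 j) / n1 j) * b1 j * ∑ l, g12 j l * (t2 l / n2 l) := by
    have : ∀ l, t2 l * (b2 l / n2 l) = (t2 l / n2 l) * a2 l
        + ∑ j, (((n1 j : ℝ) - t1 j) / n1 j) * g12 j l * b1 j * (t2 l / n2 l) := by
      intro l
      simp only [hb2]
      rw [← Finset.sum_mul]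
      ring
    rw [Finset.sum_congr rfl fun l _ => this l, Finset.sum_add_distrib]
    congr 1
    rw [Finset.sum_comm]
    refine Finset.sum_congr rfl fun j _ => ?_
    rw [Finset.mul_sum]
    refine Finset.sum_congr rfl fun l _ => ?_
    ring
  have hgsum_le : ∀ j, ∑ l, g12 j l * (t2 l / n2 l) ≤ 1 := by
    intro j
    calc ∑ l, g12 j l * (t2 l / n2 l) ≤ ∑ l, g12 j l := by
          refine Finset.sum_le_sum fun l _ => ?_
          calc g12 j l * (t2 l / n2 l) ≤ g12 j l * 1 :=
                mul_le_mul_of_nonneg_left (hr2le l) (hg12 j l).1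
            _ = g12 j l := mul_one _
      _ = 1 := hg12row j
  have hstep : ∑ l, t2 l * (b2 l / n2 l)
      ≤ (∑ l, (t2 l / n2 l) * a2 l)
        + ∑ j, (((n1 j : ℝ) - t1 j) / n1 j) * b1 j := by
    rw [hexp2]
    refine add_le_add_right (Finset.sum_le_sum fun j _ => ?_) _
    calc (((n1 j : ℝ) - t1 j) / n1 j) * b1 j * ∑ l, g12 j l * (t2 l / n2 l)
        ≤ (((n1 j : ℝ) - t1 j) / n1 j) * b1 j * 1 :=
          mul_le_mul_of_nonneg_left (hgsum_le j)
            (mul_nonneg (hc1nn j) (hb1nn j))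
      _ = (((n1 j : ℝ) - t1 j) / n1 j) * b1 j := mul_one _
  have hsum_b1 : ∑ j, b1 j = (∑ j, a1 j)
      + ∑ l, (((n2 l : ℝ) - t2 l) / n2 l) * a2 l := by
    simp only [hb1]
    rw [Finset.sum_add_distrib]
    congr 1
    rw [Finset.sum_comm]
    refine Finset.sum_congr rfl fun l _ => ?_
    calc ∑ j, (((n2 l : ℝ) - t2 l) / n2 l) * g21 l j * a2 l
        = ((((n2 l : ℝ) - t2 l) / n2 l) * a2 l) * ∑ j, g21 l j := by
          rw [Finset.mul_sum]
          exact Finset.sum_congr rfl fun j _ => by ring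
      _ = (((n2 l : ℝ) - t2 l) / n2 l) * a2 l := by rw [hg21row l, mul_one]
  calc (∑ j, t1 j * (b1 j / n1 j)) + ∑ l, t2 l * (b2 l / n2 l)
      ≤ (∑ j, (t1 j / n1 j) * b1 j)
        + ((∑ l, (t2 l / n2 l) * a2 l)
          + ∑ j, (((n1 j : ℝ) - t1 j) / n1 j) * b1 j) := by
        refine add_le_add (le_of_eq ?_) hstep
        exact Finset.sum_congr rfl fun j _ => by ring
    _ = (∑ j, b1 j) + ∑ l, (t2 l / n2 l) * a2 l := by
        have hcomb : (∑ j, (t1 j / n1 j) * b1 j)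
            + ∑ j, (((n1 j : ℝ) - t1 j) / n1 j) * b1 j = ∑ j, b1 j := by
          rw [← Finset.sum_add_distrib]
          refine Finset.sum_congr rfl fun j _ => ?_
          calc (t1 j / n1 j) * b1 j + (((n1 j : ℝ) - t1 j) / n1 j) * b1 j
              = (t1 j / n1 j + ((n1 j : ℝ) - t1 j) / n1 j) * b1 j := by ring
            _ = b1 j := by rw [hsplit1 j, one_mul]
        linarith
    _ = (∑ j, a1 j) + (∑ l, (((n2 l : ℝ) - t2 l) / n2 l) * a2 l
          + ∑ l, (t2 l / n2 l) * a2 l) := by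
        rw [hsum_b1]; ring
    _ = (∑ j, a1 j) + ∑ l, a2 l := by
        congr 1
        rw [← Finset.sum_add_distrib]
        refine Finset.sum_congr rfl fun l _ => ?_
        have := hsplit2 l
        calc (((n2 l : ℝ) - t2 l) / n2 l) * a2 l + (t2 l / n2 l) * a2 l
            = (t2 l / n2 l + ((n2 l : ℝ) - t2 l) / n2 l) * a2 l := by ring
          _ = a2 l := by rw [this, one_mul]
    _ = α := hα
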